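/- Let A be a unital C*-algebra, E, F Hilbert A-modules, θ : E → F an A-module map preserving orthogonality, x₀ ∈ E with ⟨x₀, x₀⟩ = 1, and set u := ⟨θ(x₀), θ(x₀)⟩. Assume u is central in A. Then for every z ∈ E with ⟨x₀, z⟩ = 0, one has ⟨θ(z), θ(z)⟩ = u·⟨z, z⟩. -/

import Mathlib

noncomputable section

/-- Data of a (right) Hilbert C*-module structure on `E` over `A`. -/
structure HilbertModuleData (A : Type*) (E : Type*)
    [NonUnitalRing A] [StarRing A] [Module ℂ A] [PartialOrder A] [Norm A]
    [NormedAddCommGroup E] [Module ℂ E] where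
  smulA : E → A → E
  smulA_add_left : ∀ x y a, smulA (x + y) a = smulA x a + smulA y a
  smulA_add_right : ∀ x a b, smulA x (a + b) = smulA x a + smulA x b
  smulA_mul : ∀ x a b, smulA x (a * b) = smulA (smulA x a) b
  smulA_smulC_left : ∀ (c : ℂ) x a, smulA (c • x) a = c • smulA x a
  smulA_smulC_right : ∀ (c : ℂ) x a, smulA x (c • a) = c • smulA x a
  inner : E → E → A
  inner_add_right : ∀ x y z, inner x (y + z) = inner x y + inner x z
  inner_smulC : ∀ (c : ℂ) x y, inner x (c • y) = c • inner x y
  inner_smulA : ∀ x y a, inner x (smulA y a) = inner x y * a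
  star_inner : ∀ x y, star (inner x y) = inner y x
  inner_self_nonneg : ∀ x, 0 ≤ inner x x
  inner_self_eq_zero : ∀ x, inner x x = 0 ↔ x = 0
  norm_eq : ∀ x, ‖x‖ = Real.sqrt ‖inner x x‖

/-- If `θ` is an orthogonality-preserving module map, `⟨x₀,x₀⟩ = 1` and
`u := ⟨θ x₀, θ x₀⟩` is central, then `⟨θ z, θ z⟩ = u⟨z,z⟩` whenever `z ⟂ x₀`. -/
theorem inner_theta_eq_on_orthogonal_complement
    {A : Type*} [NormedRing A] [StarRing A] [CStarRing A] [NormedAlgebra ℂ A]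
    [StarModule ℂ A] [PartialOrder A] [StarOrderedRing A] [CompleteSpace A]
    {E F : Type*} [NormedAddCommGroup E] [Module ℂ E]
    [NormedAddCommGroup F] [Module ℂ F]
    (hE : HilbertModuleData A E) (hF : HilbertModuleData A F)
    (θ : E →ₗ[ℂ] F)
    (hmod : ∀ (x : E) (a : A), θ (hE.smulA x a) = hF.smulA (θ x) a)
    (horth : ∀ x y : E, hE.inner x y = 0 → hF.inner (θ x) (θ y) = 0)
    (x₀ : E) (hx₀ : hE.inner x₀ x₀ = 1)
    (hcentral : ∀ a : A, hF.inner (θ x₀) (θ x₀) * a = a * hF.inner (θ x₀) (θ x₀))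
    (z : E) (hz : hE.inner x₀ z = 0) :
    hF.inner (θ z) (θ z) = hF.inner (θ x₀) (θ x₀) * hE.inner z z := by
  letI : CStarAlgebra A := { }
  set u := hF.inner (θ x₀) (θ x₀) with hu
  set t := CFC.sqrt (hE.inner z z) with ht
  have htnn : (0:A) ≤ t := CFC.sqrt_nonneg _
  have hts : star t = t := IsSelfAdjoint.of_nonneg htnn
  have ht2 : t * t = hE.inner z z := by
    have := CFC.sq_sqrt (hE.inner z z) (hE.inner_self_nonneg z)
    rw [sq] at this; rw [ht]; exact this
  -- inner is additive / negation in left argument via star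
  have inner_add_left : ∀ (hM : HilbertModuleData A F) (x y w : F),
      hM.inner (x + y) w = hM.inner x w + hM.inner y w := by
    intro hM x y w
    rw [← hM.star_inner, hM.inner_add_right, star_add, hM.star_inner, hM.star_inner]
  have inner_sub_right : ∀ (hM : HilbertModuleData A F) (x y w : F),
      hM.inner x (y - w) = hM.inner x y - hM.inner x w := by
    intro hM x y w
    have : y - w = y + (-1 : ℂ) • w := by
      rw [neg_one_smul]; abel
    rw [this, hM.inner_add_right, hM.inner_smulC, neg_one_smul, sub_eq_add_neg]
  have inner_add_leftE : ∀ (x y w : E),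
      hE.inner (x + y) w = hE.inner x w + hE.inner y w := by
    intro x y w
    rw [← hE.star_inner, hE.inner_add_right, star_add, hE.star_inner, hE.star_inner]
  have inner_sub_rightE : ∀ (x y w : E),
      hE.inner x (y - w) = hE.inner x y - hE.inner x w := by
    intro x y w
    have : y - w = y + (-1 : ℂ) • w := by
      rw [neg_one_smul]; abel
    rw [this, hE.inner_add_right, hE.inner_smulC, neg_one_smul, sub_eq_add_neg]
  have hzx : hE.inner z x₀ = 0 := by
    rw [← hE.star_inner, hz, star_zero]
  set s := hE.smulA x₀ t with hs
  have i1 : hE.inner z s = 0 := by rw [hs, hE.inner_smulA, hzx, zero_mul]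
  have i2 : hE.inner s z = 0 := by rw [← hE.star_inner, i1, star_zero]
  have i1' : hE.inner x₀ s = t := by rw [hs, hE.inner_smulA, hx₀, one_mul]
  have i3 : hE.inner s s = hE.inner z z := by
    rw [hs, hE.inner_smulA, ← hs, ← hE.star_inner, i1', hts, ht2]
  have key : hE.inner (z + s) (z - s) = 0 := by
    rw [inner_add_leftE, inner_sub_rightE, inner_sub_rightE, i1, i2, i3]
    abel
  have keyF : hF.inner (θ (z + s)) (θ (z - s)) = 0 := horth _ _ key
  rw [map_add, map_sub, hmod] at keyF
  set w := hF.smulA (θ x₀) t with hw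
  have j1 : hF.inner (θ z) w = 0 := by
    rw [hw, hF.inner_smulA, horth z x₀ hzx, zero_mul]
  have j2 : hF.inner w (θ z) = 0 := by rw [← hF.star_inner, j1, star_zero]
  have hus : star u = u := by rw [hu, hF.star_inner]
  have j3 : hF.inner w w = u * hE.inner z z := by
    rw [hw, hF.inner_smulA, ← hw, ← hF.star_inner, hw, hF.inner_smulA, ← hu,
      star_mul, hus, hts, mul_assoc, hcentral t, ← mul_assoc, ht2]
    exact (hcentral _).symm
  rw [inner_add_left hF, inner_sub_right hF, inner_sub_right hF, j1, j2, j3] at keyF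
  have : hF.inner (θ z) (θ z) - u * hE.inner z z = 0 := by
    rw [← keyF]; abel
  exact sub_eq_zero.mp this
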